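/- Let u, v ≥ 2 be integers with uv ≠ 4, and define g_{u,v} on sequences in A₂ recursively by: g_{u,v}(⟦q₀⟧) = ⟦q₀⟧; if q₁ < 0 and u ≠ 2, or q₁ < −2 and u = 2, then g_{u,v}(⟦q₀,...,q_r⟧) = ⟦q₀−1,1⟧ ⊕ g_{v,u}(−⟦q₁+1,q₂,...,q_r⟧); if q₁ = −2, r > 1, u = 2, then g_{u,v}(⟦q₀,...,q_r⟧) = ⟦q₀−1,2⟧ ⊕ g_{v,u}(⟦q₂−1,q₃,...,q_r⟧); if q₁ = −2, r = 1, u = 2, then g_{u,v}(⟦q₀,−2⟧) = ⟦q₀−1,2⟧; otherwise g_{u,v}(⟦q₀,...,q_r⟧) = ⟦q₀⟧ ⊕ g_{v,u}(⟦q₁,...,q_r⟧). Then E(g_{u,v}(s)) = E(s) for every s ∈ A₂. -/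

import Mathlib

/-- Evaluation of a finite continued fraction `[q₀, q₁, …, q_r]`. -/
def E : List ℤ → ℚ
  | [] => 0
  | [q] => (q : ℚ)
  | q :: l => (q : ℚ) + 1 / E l

/-- Concatenation `⊕` of finite sequences, merging when the second begins with `0`. -/
def oplus (a b : List ℤ) : List ℤ :=
  match b with
  | [] => a
  | p :: ps =>
    if p = 0 then
      match ps with
      | [] => a
      | p1 :: ps' => a.dropLast ++ (a.getLast! + p1) :: ps'
    else a ++ (p :: ps)

/-- No tail continued fraction `[q_i, …, q_r]` (for `0 < i < r`) evaluates to `0`. -/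
def TailsNonzero (l : List ℤ) : Prop :=
  ∀ i, 0 < i → i + 1 < l.length → E (l.drop i) ≠ 0

/-- `[q₀, …, q_r]` is a short continued fraction: `q_i ≥ 1` for `0 < i < r`, `q_r > 1` if `r > 0`. -/
def IsShortCF (l : List ℤ) : Prop :=
  l ≠ [] ∧ (∀ i, 0 < i → i + 1 < l.length → 1 ≤ l.getD i 0) ∧
    (1 < l.length → 1 < l.getD (l.length - 1) 0)

/-- Membership in `A₁`. -/
def memA1 (l : List ℤ) : Prop := IsShortCF l ∧ TailsNonzero l

/-- Membership in `A₂`: all entries after the first have absolute value `> 1`. -/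
def memA2 (l : List ℤ) : Prop :=
  l ≠ [] ∧ (∀ i, 0 < i → i < l.length → 1 < |l.getD i 0|) ∧ TailsNonzero l

/-- The `(u,v)`-divisibility property: `v` divides even-indexed entries, `u` odd-indexed ones. -/
def DivProp (u v : ℤ) (l : List ℤ) : Prop :=
  ∀ i, i < l.length → (if i % 2 = 0 then v else u) ∣ l.getD i 0

/-- The function `f_{u,v} : A₁ → A₂`. -/
def fCF (u v : ℤ) : List ℤ → List ℤ
  | [] => []
  | [q0] => [q0]
  | q0 :: q1 :: rest =>
    if ¬ (v ∣ q0) ∧ q1 = 1 then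
      match rest with
      | [] => [q0 + 1]
      | q2 :: rest' => oplus [q0 + 1] ((fCF v u ((q2 + 1) :: rest')).map (fun x => -x))
    else if ¬ (v ∣ q0) ∧ q1 = 2 then
      match rest with
      | [] => [q0 + 1, -2]
      | q2 :: rest' => oplus [q0 + 1] (fCF v u (-2 :: (q2 + 1) :: rest'))
    else oplus [q0] (fCF v u (q1 :: rest))
termination_by l => l.length
decreasing_by all_goals (simp_all [List.length]; try omega)

/-- The function `g_{u,v} : A₂ → A₁`. -/
def gCF (u v : ℤ) : List ℤ → List ℤ
  | [] => []
  | [q0] => [q0]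
  | q0 :: q1 :: rest =>
    if (q1 < 0 ∧ u ≠ 2) ∨ (q1 < -2 ∧ u = 2) then
      oplus [q0 - 1, 1] ((gCF v u (((q1 + 1) :: rest).map (fun x => -x))))
    else if q1 = -2 ∧ u = 2 then
      match rest with
      | [] => [q0 - 1, 2]
      | q2 :: rest' => oplus [q0 - 1, 2] (gCF v u ((q2 - 1) :: rest'))
    else oplus [q0] (gCF v u (q1 :: rest))
termination_by l => l.length
decreasing_by all_goals (simp_all [List.length]; try omega)

lemma E_cons (a : ℤ) (t : List ℤ) : E (a :: t) = (a : ℚ) + 1 / E t := by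
  cases t with
  | nil => simp [E]
  | cons b t => rfl

lemma E_oplus_one (x : ℤ) (b : List ℤ) : E (oplus [x] b) = (x : ℚ) + 1 / E b := by
  match b with
  | [] => simp [oplus, E]
  | [p] =>
    by_cases hp : p = 0
    · subst hp; simp [oplus, E, E_cons]
    · simp [oplus, hp, E_cons]
  | p :: p1 :: ps =>
    by_cases hp : p = 0
    · subst hp
      simp only [oplus, if_pos rfl]
      simp only [List.dropLast, List.getLast!, List.nil_append, if_true]
      rw [E_cons, E_cons, E_cons]
      push_cast
      simp only [List.getLast_singleton, zero_add, one_div_one_div]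
      ring
    · simp only [oplus, if_neg hp, List.cons_append, List.nil_append]
      rw [E_cons]

lemma E_oplus_two (x y : ℤ) (b : List ℤ) :
    E (oplus [x, y] b) = (x : ℚ) + 1 / ((y : ℚ) + 1 / E b) := by
  match b with
  | [] => simp [oplus, E_cons, E]
  | [p] =>
    by_cases hp : p = 0
    · subst hp; simp [oplus, E, E_cons]
    · simp only [oplus, if_neg hp, List.cons_append, List.nil_append]
      rw [E_cons, E_cons]
  | p :: p1 :: ps =>
    by_cases hp : p = 0
    · subst hp
      simp only [oplus, if_pos rfl]
      simp only [List.dropLast, List.getLast!, List.cons_append, List.nil_append, if_true]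
      rw [E_cons, E_cons, E_cons, E_cons]
      push_cast
      simp only [List.getLast_cons, List.getLast_singleton, ne_eq, zero_add, one_div_one_div,
        not_false_eq_true, List.cons_ne_nil]
      ring
    · simp only [oplus, if_neg hp, List.cons_append, List.nil_append]
      rw [E_cons, E_cons]

lemma E_map_neg (l : List ℤ) : E (l.map (fun x => -x)) = -E l := by
  induction l with
  | nil => simp [E]
  | cons a t ih =>
    rw [List.map_cons, E_cons, E_cons, ih]
    push_cast
    rw [one_div_neg_eq_neg_one_div]
    ring

lemma abs_E_gt_one : ∀ l : List ℤ, l ≠ [] → (∀ q ∈ l, 2 ≤ |q|) → 1 < |E l| := by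
  intro l
  induction l with
  | nil => intro h; exact absurd rfl h
  | cons a t ih =>
    intro _ h
    cases t with
    | nil =>
      have ha : 2 ≤ |a| := h a (by simp)
      have : (2 : ℚ) ≤ |(a : ℚ)| := by
        rw [← Int.cast_abs]; exact_mod_cast ha
      simp only [E]
      linarith
    | cons b t' =>
      have ht : 1 < |E (b :: t')| := ih (by simp) (fun q hq => h q (by simp [hq]))
      have ha : 2 ≤ |a| := h a (by simp)
      have ha' : (2 : ℚ) ≤ |(a : ℚ)| := by
        rw [← Int.cast_abs]; exact_mod_cast ha
      rw [E_cons]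
      have h1 : |1 / E (b :: t')| < 1 := by
        rw [abs_div, abs_one, div_lt_one (by linarith)]
        linarith
      have := abs_add_le ((a : ℚ) + 1 / E (b :: t')) (-(1 / E (b :: t')))
      simp only [add_neg_cancel_right, abs_neg] at this
      linarith

lemma ne_of_abs_gt_one {x : ℚ} (h : 1 < |x|) : x ≠ 0 ∧ x + 1 ≠ 0 ∧ x - 1 ≠ 0 ∧ 2 * x - 1 ≠ 0 := by
  rcases lt_abs.mp h with h1 | h1
  · refine ⟨?_, ?_, ?_, ?_⟩ <;> intro h0 <;> linarith
  · refine ⟨?_, ?_, ?_, ?_⟩ <;> intro h0 <;> linarith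

lemma memA2_tail_replace {q0 q1 : ℤ} {rest : List ℤ} (h : memA2 (q0 :: q1 :: rest)) (a : ℤ) :
    memA2 (a :: rest) := by
  obtain ⟨-, h2, h3⟩ := h
  refine ⟨by simp, ?_, ?_⟩
  · intro i hi hilen
    obtain ⟨j, rfl⟩ : ∃ j, i = j + 1 := ⟨i - 1, by omega⟩
    have := h2 (j + 2) (by omega) (by simp at hilen ⊢; omega)
    simpa using this
  · intro i hi hilen
    obtain ⟨j, rfl⟩ : ∃ j, i = j + 1 := ⟨i - 1, by omega⟩
    have := h3 (j + 2) (by omega) (by simp at hilen ⊢; omega)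
    simpa using this

lemma memA2_neg {l : List ℤ} (h : memA2 l) : memA2 (l.map (fun x => -x)) := by
  obtain ⟨h1, h2, h3⟩ := h
  refine ⟨by simpa using h1, ?_, ?_⟩
  · intro i hi hilen
    rw [List.length_map] at hilen
    rw [List.getD_eq_getElem _ _ (by simpa using hilen), List.getElem_map, abs_neg]
    rw [← List.getD_eq_getElem _ 0 hilen]
    exact h2 i hi hilen
  · intro i hi hilen
    rw [List.length_map] at hilen
    rw [← List.map_drop, E_map_neg, neg_ne_zero]
    exact h3 i hi hilen

lemma mem_tail_abs {q0 : ℤ} {t : List ℤ} (h : memA2 (q0 :: t)) : ∀ q ∈ t, 2 ≤ |q| := by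
  intro q hq
  obtain ⟨i, hi, rfl⟩ := List.mem_iff_getElem.mp hq
  have := h.2.1 (i + 1) (by omega) (by simp; omega)
  rw [List.getD_cons_succ, List.getD_eq_getElem _ _ hi] at this
  omega

lemma gCF_cons_cons (u v q0 q1 : ℤ) (rest : List ℤ) :
    gCF u v (q0 :: q1 :: rest) =
    (if (q1 < 0 ∧ u ≠ 2) ∨ (q1 < -2 ∧ u = 2) then
      oplus [q0 - 1, 1] ((gCF v u (((q1 + 1) :: rest).map (fun x => -x))))
    else if q1 = -2 ∧ u = 2 then
      match rest with
      | [] => [q0 - 1, 2]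
      | q2 :: rest' => oplus [q0 - 1, 2] (gCF v u ((q2 - 1) :: rest'))
    else oplus [q0] (gCF v u (q1 :: rest))) := by
  rw [gCF.eq_def]

lemma E_gCF_aux : ∀ n (u v : ℤ) (l : List ℤ), l.length ≤ n → memA2 l → E (gCF u v l) = E l := by
  intro n
  induction n with
  | zero =>
    intro u v l hlen hl
    cases l with
    | nil => exact absurd rfl hl.1
    | cons a t => simp at hlen
  | succ n ih =>
    intro u v l hlen hl
    match l with
    | [] => exact absurd rfl hl.1
    | [q0] => simp [gCF]
    | q0 :: q1 :: rest =>
      have habs : 1 < |E (q1 :: rest)| := abs_E_gt_one _ (by simp) (mem_tail_abs hl)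
      obtain ⟨hx0, hx1, -, -⟩ := ne_of_abs_gt_one habs
      by_cases hA : (q1 < 0 ∧ u ≠ 2) ∨ (q1 < -2 ∧ u = 2)
      · have hsub : memA2 (((q1 + 1) :: rest).map (fun x => -x)) :=
          memA2_neg (memA2_tail_replace hl (q1 + 1))
        have hlen' : (((q1 + 1) :: rest).map (fun x => -x)).length ≤ n := by
          simp at hlen ⊢; omega
        have hEE : E (((q1 + 1) :: rest).map (fun x => -x)) = -(E (q1 :: rest) + 1) := by
          rw [E_map_neg, E_cons, E_cons]; push_cast; ring
        rw [gCF_cons_cons, if_pos hA, E_oplus_two, ih v u _ hlen' hsub, hEE, E_cons q0]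
        set x := E (q1 :: rest) with hxdef
        have hx1' : (-1 : ℚ) + -x ≠ 0 := fun h => hx1 (by linarith)
        push_cast
        have hx1'' : x + 1 ≠ 0 := hx1
        field_simp [hx0, hx1', hx1'']
        ring
      · by_cases hB : q1 = -2 ∧ u = 2
        · cases rest with
          | nil =>
            rw [gCF_cons_cons, if_neg hA, if_pos hB]
            show E [q0 - 1, 2] = E [q0, q1]
            rw [hB.1, E_cons, E_cons, E_cons, E_cons]
            simp only [E]
            push_cast
            ring
          | cons q2 rest' =>
            have hy : 1 < |E (q2 :: rest')| :=
              abs_E_gt_one _ (by simp) (fun q hq => mem_tail_abs hl q (by simp [hq]))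
            obtain ⟨hy0, -, hy1, hy2⟩ := ne_of_abs_gt_one hy
            have hsub : memA2 ((q2 - 1) :: rest') :=
              memA2_tail_replace (memA2_tail_replace hl 0) (q2 - 1)
            have hlen' : ((q2 - 1) :: rest').length ≤ n := by simp at hlen ⊢; omega
            rw [gCF_cons_cons, if_neg hA, if_pos hB]
            show E (oplus [q0 - 1, 2] (gCF v u ((q2 - 1) :: rest'))) = _
            rw [E_oplus_two, ih v u _ hlen' hsub]
            have hE1 : E ((q2 - 1) :: rest') = E (q2 :: rest') - 1 := by
              rw [E_cons, E_cons]; push_cast; ring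
            have hq1 := hB.1
            subst hq1
            rw [hE1, E_cons q0, E_cons (-2 : ℤ)]
            set y := E (q2 :: rest') with hydef
            have hxy : (((-2 : ℤ) : ℚ) + 1 / y) ≠ 0 := by
              rw [E_cons] at hx0; exact hx0
            have key : ∀ q0' y' : ℚ, y' ≠ 0 → y' - 1 ≠ 0 → 2 * y' - 1 ≠ 0 →
                q0' - 1 + 1 / (2 + 1 / (y' - 1)) = q0' + 1 / (-2 + 1 / y') := by
              intro q0' y' h0 h1 h2
              have ha : (2 : ℚ) + 1 / (y' - 1) = (2 * y' - 1) / (y' - 1) := by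
                field_simp; ring
              have hb : (-2 : ℚ) + 1 / y' = -((2 * y' - 1) / y') := by
                field_simp; ring
              rw [ha, hb, one_div_div, one_div_neg_eq_neg_one_div, one_div_div]
              have hc : (y' - 1) / (2 * y' - 1) + y' / (2 * y' - 1) = 1 := by
                rw [← add_div, show y' - 1 + y' = 2 * y' - 1 by ring]
                exact div_self h2
              linarith
            push_cast at hxy ⊢
            linarith [key (q0 : ℚ) y hy0 hy1 hy2]
        · have hsub : memA2 (q1 :: rest) := memA2_tail_replace hl q1
          have hlen' : (q1 :: rest).length ≤ n := by simp at hlen ⊢; omega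
          rw [gCF_cons_cons, if_neg hA, if_neg hB, E_oplus_one, ih v u _ hlen' hsub, E_cons q0 (q1 :: rest)]

/-- For `u, v ≥ 2` with `uv ≠ 4`, the function `g_{u,v}` preserves the evaluation
of every sequence in `A₂`. -/
theorem E_gCF (u v : ℤ) (hu : 2 ≤ u) (hv : 2 ≤ v) (huv : u * v ≠ 4)
    (l : List ℤ) (hl : memA2 l) :
    E (gCF u v l) = E l :=
  E_gCF_aux l.length u v l le_rfl hl
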